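/- If E is a real locally convex Hausdorff space with the metric convex compactness property (the closed convex hull of every compact metrizable subset is compact), then every continuous map f : [0,1] → E is Pettis integrable with respect to Lebesgue measure. -/

import Mathlib

open MeasureTheory Set

variable {E : Type*} [AddCommGroup E] [Module ℝ E] [TopologicalSpace E]
  [IsTopologicalAddGroup E] [ContinuousSMul ℝ E] [LocallyConvexSpace ℝ E] [T2Space E]

/-- The continuous image of a compact second-countable space in a compact Hausdorff space
(onto) is second countable. -/
theorem secondCountable_of_compact_quotient {X Y : Type*} [TopologicalSpace X] [TopologicalSpace Y]
    [CompactSpace X] [SecondCountableTopology X] [T2Space Y]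
    {q : X → Y} (hq : Continuous q) (hsurj : Function.Surjective q) :
    SecondCountableTopology Y := by
  obtain ⟨B, hBc, -, hB⟩ := TopologicalSpace.exists_countable_basis X
  let V : Set (Set X) → Set Y := fun t => (q '' (⋃₀ t)ᶜ)ᶜ
  let S : Set (Set Y) := V '' {t | t.Finite ∧ t ⊆ B}
  have hSc : S.Countable := (Set.countable_setOf_finite_subset hBc).image V
  have hbasis : TopologicalSpace.IsTopologicalBasis S := by
    apply TopologicalSpace.isTopologicalBasis_of_isOpen_of_nhds
    · rintro u ⟨t, ⟨htf, htB⟩, rfl⟩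
      have hopen : IsOpen (⋃₀ t) := isOpen_sUnion fun s hs => hB.isOpen (htB hs)
      have : IsCompact (q '' (⋃₀ t)ᶜ) := (hopen.isClosed_compl.isCompact).image hq
      exact this.isClosed.isOpen_compl
    · intro a u hau hu
      set F : Set X := q ⁻¹' {a} with hF
      have hFc : IsCompact F := (isClosed_singleton.preimage hq).isCompact
      have hFu : F ⊆ q ⁻¹' u := fun x hx => by
        simp only [hF, mem_preimage, mem_singleton_iff] at hx
        simp [mem_preimage, hx, hau]
      -- cover F by basis elements inside q ⁻¹' u
      have hcov : ∀ x ∈ F, ∃ v, v ∈ B ∧ x ∈ v ∧ v ⊆ q ⁻¹' u := by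
        intro x hx
        obtain ⟨v, hvB, hxv, hvu⟩ := hB.exists_subset_of_mem_open (hFu hx) (hu.preimage hq)
        exact ⟨v, hvB, hxv, hvu⟩
      classical
      choose! g hgB hxg hgu using hcov
      obtain ⟨s, hs⟩ := hFc.elim_finite_subcover (fun x : F => g x)
        (fun x => hB.isOpen (hgB x x.2)) (fun x hx => mem_iUnion.2 ⟨⟨x, hx⟩, hxg x hx⟩)
      refine ⟨V ((fun x : F => g x) '' ↑s), ⟨_, ⟨(s.finite_toSet).image _, ?_⟩, rfl⟩, ?_, ?_⟩
      · rintro v ⟨x, -, rfl⟩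
        exact hgB x x.2
      · -- a ∈ V _
        intro hmem
        obtain ⟨x, hx1, hx2⟩ := hmem
        apply hx1
        have hxF : x ∈ F := by simp [hF, hx2]
        obtain ⟨i, hi⟩ := mem_iUnion.1 (hs hxF)
        simp only [mem_iUnion, exists_prop] at hi
        exact ⟨g i, ⟨i, hi.1, rfl⟩, hi.2⟩
      · -- V _ ⊆ u
        intro z hz
        obtain ⟨x, rfl⟩ := hsurj z
        by_cases hx : x ∈ ⋃₀ ((fun x : F => g x) '' ↑s)
        · obtain ⟨v, ⟨i, -, rfl⟩, hxv⟩ := hx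
          exact hgu i i.2 hxv
        · exact absurd ⟨x, hx, rfl⟩ hz
  exact hbasis.secondCountableTopology hSc

/-- `E` has the metric convex compactness property: the closed convex hull of every
compact metrizable subset is compact. -/
def MetricConvexCompactness (E : Type*) [AddCommGroup E] [Module ℝ E] [TopologicalSpace E] : Prop :=
  ∀ K : Set E, IsCompact K → TopologicalSpace.MetrizableSpace K →
    IsCompact (closure (convexHull ℝ K))

theorem stmt1 (h : MetricConvexCompactness E) (f : Icc (0:ℝ) 1 → E) (hf : Continuous f) :
    ∃ v : E, ∀ e' : E →L[ℝ] ℝ,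
      Integrable (fun t : Icc (0:ℝ) 1 => e' (f t)) volume ∧
      e' v = ∫ t : Icc (0:ℝ) 1, e' (f t) := by
  classical
  set K : Set E := range f with hKdef
  have hK : IsCompact K := isCompact_range hf
  haveI : CompactSpace K := isCompact_iff_compactSpace.mp hK
  haveI : SecondCountableTopology K :=
    secondCountable_of_compact_quotient (q := fun t : Icc (0:ℝ) 1 => (⟨f t, mem_range_self t⟩ : K))
      (hf.subtype_mk _) (by rintro ⟨y, t, rfl⟩; exact ⟨t, rfl⟩)
  have hmet : TopologicalSpace.MetrizableSpace K := inferInstance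
  set Q : Set E := closure (convexHull ℝ K) with hQdef
  have hQc : IsCompact Q := h K hK hmet
  have hQconv : Convex ℝ Q := (convex_convexHull ℝ K).closure
  have hfQ : ∀ t, f t ∈ Q := fun t =>
    subset_closure (subset_convexHull ℝ K (mem_range_self t))
  -- integrability of scalar compositions
  have hint : ∀ e' : E →L[ℝ] ℝ, Integrable (fun t : Icc (0:ℝ) 1 => e' (f t)) volume := by
    intro e'
    exact integrableOn_univ.mp
      (((e'.continuous.comp hf).continuousOn).integrableOn_compact isCompact_univ)
  -- closed constraint sets
  set C : (E →L[ℝ] ℝ) → Set E := fun e' => {x | e' x = ∫ t : Icc (0:ℝ) 1, e' (f t)} with hCdef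
  have hCclosed : ∀ e', IsClosed (C e') := fun e' =>
    isClosed_eq e'.continuous continuous_const
  have hfin : ∀ u : Finset (E →L[ℝ] ℝ), (Q ∩ ⋂ e' ∈ u, C e').Nonempty := by
    intro u
    set T : E →L[ℝ] (u → ℝ) := ContinuousLinearMap.pi (fun i : u => (i : E →L[ℝ] ℝ)) with hT
    have hgint : Integrable (fun t : Icc (0:ℝ) 1 => T (f t)) volume :=
      integrableOn_univ.mp
        (((T.continuous.comp hf).continuousOn).integrableOn_compact isCompact_univ)
    have hTQconv : Convex ℝ (T '' Q) := hQconv.is_linear_image T.toLinearMap.isLinear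
    have hTQclosed : IsClosed (T '' Q) := (hQc.image T.continuous).isClosed
    have hmem : (∫ t : Icc (0:ℝ) 1, T (f t)) ∈ T '' Q :=
      hTQconv.integral_mem hTQclosed (ae_of_all _ fun t => ⟨f t, hfQ t, rfl⟩) hgint
    obtain ⟨x, hxQ, hxT⟩ := hmem
    refine ⟨x, hxQ, ?_⟩
    simp only [mem_iInter]
    intro e' he'
    have hproj := (ContinuousLinearMap.proj (R := ℝ) (φ := fun _ : u => ℝ)
      (⟨e', he'⟩ : u)).integral_comp_comm hgint
    simp only [ContinuousLinearMap.proj_apply] at hproj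
    have hcomp : T x (⟨e', he'⟩ : u) = ∫ t : Icc (0:ℝ) 1, T (f t) (⟨e', he'⟩ : u) := by
      rw [hxT]; exact hproj.symm
    simpa [hT, ContinuousLinearMap.pi_apply, hCdef] using hcomp
  obtain ⟨v, hvQ, hv⟩ := hQc.inter_iInter_nonempty C hCclosed (by
    intro u
    simpa using hfin u)
  refine ⟨v, fun e' => ⟨hint e', ?_⟩⟩
  have := mem_iInter.1 hv e'
  exact this
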